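/- Suppose φ*(N) divides N, 2^e exactly divides N, 2^f divides N/φ*(N), and the odd prime divisors of N are p_1, …, p_r with 2^{f_i} dividing p_i − 1 for each i. Then f + f_1 + ⋯ + f_r ≤ e. In particular, N has at most e distinct odd prime factors. -/

import Mathlib

/-- The unitary totient function: φ*(n) = ∏_{p^e || n} (p^e - 1). -/
def uphi (n : ℕ) : ℕ := ∏ p ∈ n.primeFactors, (p ^ n.factorization p - 1)

theorem stmt3 (N e f : ℕ) (fi : ℕ → ℕ) (hN : 0 < N) (hdvd : uphi N ∣ N)
    (h2e : 2 ^ e ∣ N) (h2e' : ¬ 2 ^ (e + 1) ∣ N)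
    (hf : 2 ^ f ∣ N / uphi N)
    (hfi : ∀ p ∈ N.primeFactors.erase 2, 2 ^ fi p ∣ p - 1) :
    f + ∑ p ∈ N.primeFactors.erase 2, fi p ≤ e := by
  -- 2^(∑ fi) divides uphi N
  have h1 : (2:ℕ) ^ (∑ p ∈ N.primeFactors.erase 2, fi p) ∣ uphi N := by
    rw [← Finset.prod_pow_eq_pow_sum]
    refine dvd_trans (Finset.prod_dvd_prod_of_dvd _ _ ?_) 
      (Finset.prod_dvd_prod_of_subset _ _ _ (Finset.erase_subset _ _))
    intro p hp
    have hdvd1 : (p - 1 : ℕ) ∣ p ^ N.factorization p - 1 := by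
      have := Nat.sub_dvd_pow_sub_pow p 1 (N.factorization p)
      simpa using this
    exact dvd_trans (hfi p hp) hdvd1
  have h2 : N = uphi N * (N / uphi N) := (Nat.mul_div_cancel' hdvd).symm
  have h3 : (2:ℕ) ^ (f + ∑ p ∈ N.primeFactors.erase 2, fi p) ∣ N := by
    have : (2:ℕ) ^ (f + ∑ p ∈ N.primeFactors.erase 2, fi p) ∣ uphi N * (N / uphi N) := by
      rw [pow_add, mul_comm ((2:ℕ)^f)]
      exact mul_dvd_mul h1 hf
    rwa [← h2] at this
  by_contra hlt
  push_neg at hlt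
  exact h2e' (dvd_trans (pow_dvd_pow 2 hlt) h3)
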